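/- Let x₀,…,xₘ ∈ ℂⁿ with x₀,…,x_{m−1} linearly independent, X = [x₀ … x_{m−1}], Y = [x₁ … xₘ]. Then the companion matrix C_c to c = X⁺ xₘ equals the twisted system matrix C = X⁺ Y, and moreover C_c = X⁺ A X where A = Y X⁺. -/

import Mathlib

open Matrix

def IsMoorePenrose {n m : ℕ} (X : Matrix (Fin n) (Fin m) ℂ)
    (P : Matrix (Fin m) (Fin n) ℂ) : Prop :=
  X * P * X = X ∧ P * X * P = P ∧ (X * P)ᴴ = X * P ∧ (P * X)ᴴ = P * X

def companion {m : ℕ} (c : Fin m → ℂ) : Matrix (Fin m) (Fin m) ℂ :=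
  Matrix.of fun i j =>
    if (j : ℕ) = m - 1 then c i else if (i : ℕ) = (j : ℕ) + 1 then 1 else 0

theorem stmt8 {n m : ℕ} (x : Fin (m + 1) → Fin n → ℂ)
    (X Y : Matrix (Fin n) (Fin m) ℂ)
    (hX : X = Matrix.of fun i j => x j.castSucc i)
    (hY : Y = Matrix.of fun i j => x j.succ i)
    (hind : LinearIndependent ℂ (fun j : Fin m => x j.castSucc))
    (P : Matrix (Fin m) (Fin n) ℂ) (hP : IsMoorePenrose X P)
    (A : Matrix (Fin n) (Fin n) ℂ) (hA : A = Y * P)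
    (C : Matrix (Fin m) (Fin m) ℂ) (hC : C = P * Y)
    (c : Fin m → ℂ) (hc : c = P.mulVec (x (Fin.last m))) :
    companion c = C ∧ companion c = P * (A * X) := by
  have hinj : Function.Injective X.mulVec := by
    rw [Matrix.mulVec_injective_iff]
    convert hind with j
    ext i
    simp [hX, Matrix.transpose_apply]
    rfl
  have hPX : P * X = 1 := by
    have hv : ∀ v, (P * X).mulVec v = (1 : Matrix (Fin m) (Fin m) ℂ).mulVec v := by
      intro v
      apply hinj
      simp only [Matrix.mulVec_mulVec, ← Matrix.mul_assoc]
      rw [hP.1, Matrix.mul_one]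
    ext i j
    have := congrFun (hv (Pi.single j 1)) i
    simpa [Matrix.mulVec_single] using this
  have key : companion c = P * Y := by
    ext i j
    simp only [companion, Matrix.of_apply, Matrix.mul_apply]
    by_cases hj : (j : ℕ) = m - 1
    · have hjl : j.succ = Fin.last m := by
        ext
        simp [Fin.val_succ, hj]
        omega
      rw [if_pos hj, hc]
      simp [Matrix.mulVec, dotProduct, hY, hjl]
    · rw [if_neg hj]
      have hjm : (j : ℕ) + 1 < m := by omega
      have hjs : j.succ = Fin.castSucc ⟨(j : ℕ) + 1, hjm⟩ := by
        ext; simp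
      have : ∑ k, P i k * Y k j = (P * X) i ⟨(j : ℕ) + 1, hjm⟩ := by
        simp [Matrix.mul_apply, hY, hX, hjs]
      rw [this, hPX]
      simp [Matrix.one_apply]
      by_cases hij : (i : ℕ) = (j : ℕ) + 1
      · have : i = ⟨(j : ℕ) + 1, hjm⟩ := by ext; simp [hij]
        simp [this, hij]
      · have : i ≠ ⟨(j : ℕ) + 1, hjm⟩ := by
          intro h; apply hij; rw [h]
        simp [this, hij]
  constructor
  · rw [key, hC]
  · rw [key, hA, Matrix.mul_assoc, hPX, Matrix.mul_one]
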